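/- Let Ĥ be a square real matrix and Δ_K ≥ 0. With F₀ = Δ_S ≥ 0 and F_{j+1} = Δ_K Σ_{i=0}^{j} |Ĥ^{j−i}| Fᵢ, the following expansion identity holds: for each j ≥ 1, F_j equals Δ_K Σ_{j−1} Δ_S, where Σ_{j−1} is the sum over all words w = |M₁^{q₁}||M₂^{q₂}|⋯|M_h^{q_h}| with letters alternating between Ĥ and Δ_K (M_i ∈ {Ĥ, Δ_K}, M_i ≠ M_{i+1}), exponents qᵢ ≥ 1 summing to j−1, with the convention Σ₀ = I. -/

import Mathlib

/-- Entrywise absolute value of a matrix. -/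
def aent {p q : ℕ} (M : Matrix (Fin p) (Fin q) ℝ) : Matrix (Fin p) (Fin q) ℝ :=
  Matrix.of fun i j => |M i j|

/-- The value of a word w = ((M₁,q₁),…,(M_h,q_h)): the product
|M₁^{q₁}||M₂^{q₂}|⋯|M_h^{q_h}|, where the letter `true` stands for Ĥ and
`false` for Δ_K.  The empty word has value I. -/
noncomputable def wordVal {n : ℕ} (Hhat ΔK : Matrix (Fin n) (Fin n) ℝ)
    (w : List (Bool × ℕ)) : Matrix (Fin n) (Fin n) ℝ :=
  (w.map fun a => aent ((if a.1 then Hhat else ΔK) ^ a.2)).prod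

namespace Stmt18Aux

/-- The alternating-word relation. -/
def R : Bool × ℕ → Bool × ℕ → Prop := fun a b => a.1 ≠ b.1

/-- The set of admissible words of total weight `j`. -/
def Aset (j : ℕ) : Set (List (Bool × ℕ)) :=
  {w | (∀ a ∈ w, 1 ≤ a.2) ∧ w.Chain' (fun a b => a.1 ≠ b.1) ∧ (w.map Prod.snd).sum = j}

lemma finite_Aset (j : ℕ) : (Aset j).Finite := by
  have hfin : {l : List (Bool × Fin (j + 1)) | l.length ≤ j}.Finite :=
    List.finite_length_le _ j
  refine (hfin.image (fun l => l.map fun p => (p.1, (p.2 : ℕ)))).subset ?_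
  rintro w ⟨h1, _, h3⟩
  have hle : ∀ a ∈ w, a.2 ≤ j := by
    intro a ha
    have : a.2 ∈ w.map Prod.snd := List.mem_map.mpr ⟨a, ha, rfl⟩
    have := List.single_le_sum (l := w.map Prod.snd) (fun x _ => Nat.zero_le x) _ this
    omega
  refine ⟨w.map fun p => (p.1, (⟨min p.2 j, by omega⟩ : Fin (j + 1))), ?_, ?_⟩
  · show (w.map _).length ≤ j
    rw [List.length_map]
    have := List.length_le_sum_of_one_le (w.map Prod.snd)
      (fun i hi => by obtain ⟨a, ha, rfl⟩ := List.mem_map.mp hi; exact h1 a ha)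
    simpa [h3] using this
  · simp only [List.map_map]
    conv_rhs => rw [← List.map_id w]
    refine List.map_congr_left ?_
    intro a ha
    have := hle a ha
    simp [Function.comp, min_eq_left this]

/-- The finite set of admissible words of weight `j`. -/
noncomputable def T (j : ℕ) : Finset (List (Bool × ℕ)) := (finite_Aset j).toFinset

lemma mem_T {j : ℕ} {w : List (Bool × ℕ)} :
    w ∈ T j ↔ (∀ a ∈ w, 1 ≤ a.2) ∧ w.Chain' (fun a b => a.1 ≠ b.1) ∧
      (w.map Prod.snd).sum = j := by
  simp [T, Set.Finite.mem_toFinset, Aset]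

lemma T_zero : T 0 = {([] : List (Bool × ℕ))} := by
  ext w
  simp only [mem_T, Finset.mem_singleton]
  constructor
  · rintro ⟨h1, _, h3⟩
    rcases w with _ | ⟨a, t⟩
    · rfl
    · exfalso
      have := h1 a (by simp)
      simp at h3
      omega
  · rintro rfl
    simp [List.Chain']

/-- Prepend a `Δ_K` letter, merging with a leading `Δ_K` letter if present. -/
def push : List (Bool × ℕ) → List (Bool × ℕ)
  | (false, b) :: t => (false, b + 1) :: t
  | v => (false, 1) :: v

/-- Remove one `Δ_K` from a word starting with a `Δ_K` letter. -/
def pop : List (Bool × ℕ) → List (Bool × ℕ)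
  | (false, 1) :: t => t
  | (false, b + 2) :: t => (false, b + 1) :: t
  | v => v

/-- Remove a leading `Ĥ` letter if present. -/
def strip : List (Bool × ℕ) → List (Bool × ℕ)
  | (true, _) :: rest => rest
  | v => v

lemma push_shape (v : List (Bool × ℕ)) : ∃ c t, push v = (false, c) :: t := by
  rcases v with _ | ⟨⟨b, e⟩, t⟩
  · exact ⟨1, [], rfl⟩
  · cases b
    · exact ⟨e + 1, t, rfl⟩
    · exact ⟨1, (true, e) :: t, rfl⟩

lemma pop_push {v : List (Bool × ℕ)} (hv : ∀ a ∈ v, 1 ≤ a.2) : pop (push v) = v := by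
  rcases v with _ | ⟨⟨b, e⟩, t⟩
  · rfl
  · cases b
    · have he : 1 ≤ e := hv (false, e) (by simp)
      obtain ⟨e', rfl⟩ := Nat.exists_eq_succ_of_ne_zero (by omega : e ≠ 0)
      rfl
    · rfl

lemma push_mem {k : ℕ} {v : List (Bool × ℕ)} (hv : v ∈ T k) : push v ∈ T (k + 1) := by
  obtain ⟨h1, h2, h3⟩ := mem_T.mp hv
  rcases v with _ | ⟨⟨b, e⟩, t⟩
  · simp at h3
    subst h3
    rw [show push ([] : List (Bool × ℕ)) = [(false, 1)] from rfl]
    exact mem_T.mpr ⟨by simp, by simp [List.Chain'], by simp⟩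
  · cases b
    · refine mem_T.mpr ⟨?_, ?_, ?_⟩
      · intro a ha
        show 1 ≤ a.2
        rw [show push ((false, e) :: t) = (false, e + 1) :: t from rfl] at ha
        rcases List.mem_cons.mp ha with rfl | ha
        · simp
        · exact h1 a (List.mem_cons_of_mem _ ha)
      · show List.Chain' _ ((false, e + 1) :: t)
        rw [List.Chain', List.isChain_cons] at h2 ⊢
        exact ⟨h2.1, h2.2⟩
      · show ((((false, e + 1) :: t)).map Prod.snd).sum = k + 1
        simp at h3 ⊢
        omega
    · refine mem_T.mpr ⟨?_, ?_, ?_⟩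
      · intro a ha
        show 1 ≤ a.2
        rw [show push ((true, e) :: t) = (false, 1) :: (true, e) :: t from rfl] at ha
        rcases List.mem_cons.mp ha with rfl | ha
        · simp
        · exact h1 a ha
      · show List.Chain' _ ((false, 1) :: (true, e) :: t)
        rw [List.Chain', List.isChain_cons_cons]
        exact ⟨by simp, h2⟩
      · show ((((false, 1) :: (true, e) :: t)).map Prod.snd).sum = k + 1
        simp at h3 ⊢
        omega

lemma pop_lemma {c : ℕ} {t : List (Bool × ℕ)} (hc : 1 ≤ c)
    (h1 : ∀ a ∈ t, 1 ≤ a.2)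
    (h2 : List.Chain' (fun a b => a.1 ≠ b.1) ((false, c) :: t)) :
    (∀ a ∈ pop ((false, c) :: t), 1 ≤ a.2) ∧
    List.Chain' (fun a b => a.1 ≠ b.1) (pop ((false, c) :: t)) ∧
    ((pop ((false, c) :: t)).map Prod.snd).sum + 1 = c + (t.map Prod.snd).sum ∧
    push (pop ((false, c) :: t)) = (false, c) :: t := by
  match c, hc with
  | 1, _ =>
    have hpop : pop ((false, 1) :: t) = t := rfl
    rw [hpop]
    refine ⟨h1, (List.isChain_cons.mp h2).2, by omega, ?_⟩
    rcases t with _ | ⟨⟨b2, c2⟩, t'⟩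
    · rfl
    · cases b2
      · exfalso
        have := (List.isChain_cons.mp h2).1 (false, c2) (by simp)
        simp [R] at this
      · rfl
  | (b + 2), _ =>
    have hpop : pop ((false, b + 2) :: t) = (false, b + 1) :: t := rfl
    rw [hpop]
    refine ⟨?_, ?_, by simp; omega, rfl⟩
    · intro a ha
      rcases List.mem_cons.mp ha with rfl | ha
      · simp
      · exact h1 a ha
    · rw [List.Chain', List.isChain_cons] at h2 ⊢
      exact ⟨h2.1, h2.2⟩

/-- The word `|Ĥ^a| · (Δ_K merged with v)`. -/
def phiW (a : ℕ) (v : List (Bool × ℕ)) : List (Bool × ℕ) :=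
  if a = 0 then push v else (true, a) :: push v

lemma phi_mem {j k : ℕ} {v : List (Bool × ℕ)} (hk : k < j) (hv : v ∈ T k) :
    phiW (j - 1 - k) v ∈ (T j).erase [(true, j)] := by
  obtain ⟨c, t, hct⟩ := push_shape v
  have hpmem := push_mem hv
  by_cases ha : j - 1 - k = 0
  · have hkj : k + 1 = j := by omega
    rw [phiW, if_pos ha]
    refine Finset.mem_erase.mpr ⟨?_, hkj ▸ hpmem⟩
    rw [hct]
    simp
  · obtain ⟨q1, q2, q3⟩ := mem_T.mp hpmem
    rw [phiW, if_neg ha]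
    refine Finset.mem_erase.mpr ⟨?_, mem_T.mpr ⟨?_, ?_, ?_⟩⟩
    · intro h
      rw [hct] at h
      simp at h
    · intro a haa
      rcases List.mem_cons.mp haa with rfl | haa
      · show 1 ≤ j - 1 - k; omega
      · exact q1 a haa
    · rw [List.Chain', List.isChain_cons]
      refine ⟨?_, q2⟩
      intro y hy
      rw [hct] at hy
      simp at hy
      subst hy
      simp
    · simp at q3 ⊢
      omega

lemma psi_spec {j : ℕ} (hj : 1 ≤ j) {w : List (Bool × ℕ)}
    (hw : w ∈ T j) (hne : w ≠ [(true, j)]) :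
    ((pop (strip w)).map Prod.snd).sum < j ∧
    pop (strip w) ∈ T (((pop (strip w)).map Prod.snd).sum) ∧
    phiW (j - 1 - ((pop (strip w)).map Prod.snd).sum) (pop (strip w)) = w := by
  obtain ⟨h1, h2, h3⟩ := mem_T.mp hw
  rcases w with _ | ⟨⟨b, e⟩, t⟩
  · exfalso; simp at h3; omega
  · have he : 1 ≤ e := h1 (b, e) (by simp)
    cases b
    · -- starts with Δ_K
      have hstrip : strip ((false, e) :: t) = (false, e) :: t := rfl
      obtain ⟨p1, p2, p3, p4⟩ :=
        pop_lemma he (fun a ha => h1 a (List.mem_cons_of_mem _ ha)) h2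
      rw [hstrip]
      set v := pop ((false, e) :: t) with hv
      have hsum : (v.map Prod.snd).sum = j - 1 := by simp at h3; omega
      refine ⟨by omega, mem_T.mpr ⟨p1, p2, rfl⟩, ?_⟩
      rw [hsum, show j - 1 - (j - 1) = 0 by omega, phiW, if_pos rfl]
      exact p4
    · -- starts with Ĥ
      rcases t with _ | ⟨⟨b2, c⟩, t'⟩
      · exfalso
        simp at h3
        subst h3
        exact hne rfl
      · have hb2 : b2 = false := by
          have := (List.isChain_cons_cons.mp h2).1
          simp at this
          cases b2
          · rfl
          · simp at this
        subst hb2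
        have hc : 1 ≤ c := h1 (false, c) (by simp)
        have h2' : List.Chain' (fun a b => a.1 ≠ b.1) ((false, c) :: t') :=
          (List.isChain_cons_cons.mp h2).2
        have h1' : ∀ a ∈ t', 1 ≤ a.2 := fun a ha =>
          h1 a (List.mem_cons_of_mem _ (List.mem_cons_of_mem _ ha))
        obtain ⟨p1, p2, p3, p4⟩ := pop_lemma hc h1' h2'
        have hstrip : strip ((true, e) :: (false, c) :: t') = (false, c) :: t' := rfl
        rw [hstrip]
        set v := pop ((false, c) :: t') with hv
        have hsum : (v.map Prod.snd).sum + 1 + e = j := by simp at h3; omega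
        refine ⟨by omega, mem_T.mpr ⟨p1, p2, rfl⟩, ?_⟩
        rw [show j - 1 - (v.map Prod.snd).sum = e by omega, phiW, if_neg (by omega), p4]

lemma pow_entry_nonneg {n : ℕ} {K : Matrix (Fin n) (Fin n) ℝ}
    (hK : ∀ i j, 0 ≤ K i j) (m : ℕ) : ∀ i j, 0 ≤ (K ^ m) i j := by
  induction m with
  | zero =>
    intro i j
    rw [pow_zero]
    by_cases h : i = j <;> simp [Matrix.one_apply, h]
  | succ m ih =>
    intro i j
    rw [pow_succ, Matrix.mul_apply]
    exact Finset.sum_nonneg fun k _ => mul_nonneg (ih i k) (hK k j)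

lemma aent_of_nonneg {p q : ℕ} {M : Matrix (Fin p) (Fin q) ℝ}
    (h : ∀ i j, 0 ≤ M i j) : aent M = M := by
  ext i j
  exact abs_of_nonneg (h i j)

lemma aent_one {p : ℕ} : aent (1 : Matrix (Fin p) (Fin p) ℝ) = 1 :=
  aent_of_nonneg fun i j => by by_cases h : i = j <;> simp [Matrix.one_apply, h]

lemma wordVal_cons {n : ℕ} (H K : Matrix (Fin n) (Fin n) ℝ) (a : Bool × ℕ)
    (w : List (Bool × ℕ)) :
    wordVal H K (a :: w) = aent ((if a.1 then H else K) ^ a.2) * wordVal H K w := by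
  simp [wordVal]

lemma wordVal_push {n : ℕ} (H K : Matrix (Fin n) (Fin n) ℝ)
    (hK : ∀ i j, 0 ≤ K i j) (v : List (Bool × ℕ)) :
    wordVal H K (push v) = K * wordVal H K v := by
  have hKe : ∀ m : ℕ, aent (K ^ m) = K ^ m := fun m =>
    aent_of_nonneg (pow_entry_nonneg hK m)
  rcases v with _ | ⟨⟨b, e⟩, t⟩
  · show wordVal H K [(false, 1)] = _
    rw [wordVal_cons]
    simp [wordVal, pow_one, aent_of_nonneg hK]
  · cases b
    · show wordVal H K ((false, e + 1) :: t) = _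
      rw [wordVal_cons, wordVal_cons]
      simp only [if_neg (Bool.false_ne_true), hKe]
      rw [pow_succ', Matrix.mul_assoc]
    · show wordVal H K ((false, 1) :: (true, e) :: t) = _
      rw [wordVal_cons]
      simp [pow_one, aent_of_nonneg hK]

lemma wordVal_phi {n : ℕ} (H K : Matrix (Fin n) (Fin n) ℝ)
    (hK : ∀ i j, 0 ≤ K i j) (a : ℕ) (v : List (Bool × ℕ)) :
    wordVal H K (phiW a v) = aent (H ^ a) * (K * wordVal H K v) := by
  by_cases ha : a = 0
  · rw [phiW, if_pos ha, wordVal_push H K hK, ha, pow_zero, aent_one, one_mul]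
  · rw [phiW, if_neg ha, wordVal_cons, wordVal_push H K hK]
    simp

lemma strip_phi (a : ℕ) (v : List (Bool × ℕ)) : strip (phiW a v) = push v := by
  obtain ⟨c, t, hct⟩ := push_shape v
  by_cases ha : a = 0
  · rw [phiW, if_pos ha, hct]; rfl
  · rw [phiW, if_neg ha]; rfl

/-- The key recursion for the word sums. -/
lemma Skey {n : ℕ} (H K : Matrix (Fin n) (Fin n) ℝ) (hK : ∀ i j, 0 ≤ K i j) (j : ℕ) :
    ∑ w ∈ T j, wordVal H K w
      = aent (H ^ j) + ∑ k ∈ Finset.range j,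
          aent (H ^ (j - 1 - k)) * (K * ∑ v ∈ T k, wordVal H K v) := by
  rcases Nat.eq_zero_or_pos j with rfl | hj
  · simp [T_zero, wordVal, aent_one]
  · have hmem : [(true, j)] ∈ T j :=
      mem_T.mpr ⟨by simp; omega, List.isChain_singleton _, by simp⟩
    rw [← Finset.add_sum_erase _ _ hmem]
    congr 1
    · simp [wordVal]
    · have hinner : ∀ k, aent (H ^ (j - 1 - k)) * (K * ∑ v ∈ T k, wordVal H K v)
          = ∑ v ∈ T k, aent (H ^ (j - 1 - k)) * (K * wordVal H K v) := by
        intro k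
        rw [Finset.mul_sum, Finset.mul_sum]
      rw [Finset.sum_congr rfl fun k _ => hinner k,
        ← Finset.sum_sigma (Finset.range j) (fun k => T k)
          (fun x => aent (H ^ (j - 1 - x.1)) * (K * wordVal H K x.2))]
      refine (Finset.sum_nbij' (i := fun x => phiW (j - 1 - x.1) x.2)
        (j := fun w => ⟨((pop (strip w)).map Prod.snd).sum, pop (strip w)⟩)
        ?_ ?_ ?_ ?_ ?_).symm
      · rintro ⟨k, v⟩ hx
        rw [Finset.mem_sigma] at hx
        exact phi_mem (Finset.mem_range.mp hx.1) hx.2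
      · intro w hw
        obtain ⟨hne, hwT⟩ := Finset.mem_erase.mp hw
        obtain ⟨s1, s2, _⟩ := psi_spec hj hwT hne
        exact Finset.mem_sigma.mpr ⟨Finset.mem_range.mpr s1, s2⟩
      · rintro ⟨k, v⟩ hx
        rw [Finset.mem_sigma] at hx
        obtain ⟨h1, _, h3⟩ := mem_T.mp hx.2
        have hs : strip (phiW (j - 1 - k) v) = push v := strip_phi _ _
        have hp : pop (push v) = v := pop_push h1
        simp only [hs, hp, h3]
      · intro w hw
        obtain ⟨hne, hwT⟩ := Finset.mem_erase.mp hw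
        exact (psi_spec hj hwT hne).2.2
      · rintro ⟨k, v⟩ _
        exact (wordVal_phi H K hK _ _).symm

end Stmt18Aux

open Stmt18Aux in
/-- F_j = Δ_K Σ_{j−1} Δ_S, where Σ_{j−1} is the sum over all alternating words
|M₁^{q₁}|⋯|M_h^{q_h}| with Mᵢ ∈ {Ĥ, Δ_K}, Mᵢ ≠ M_{i+1}, qᵢ ≥ 1, Σqᵢ = j−1
(with the convention Σ₀ = I, the empty word). -/
theorem stmt18 {n q : ℕ} (Hhat ΔK : Matrix (Fin n) (Fin n) ℝ)
    (ΔS : Matrix (Fin n) (Fin q) ℝ)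
    (hΔK : ∀ i j, 0 ≤ ΔK i j) (hΔS : ∀ i j, 0 ≤ ΔS i j)
    (F : ℕ → Matrix (Fin n) (Fin q) ℝ)
    (hF0 : F 0 = ΔS)
    (hF : ∀ j, F (j + 1) = ΔK * ∑ i ∈ Finset.range (j + 1), aent (Hhat ^ (j - i)) * F i) :
    ∀ j, 1 ≤ j →
      F j = ΔK * (∑ᶠ w ∈ {w : List (Bool × ℕ) | (∀ a ∈ w, 1 ≤ a.2) ∧
          w.Chain' (fun a b => a.1 ≠ b.1) ∧ (w.map Prod.snd).sum = j - 1},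
        wordVal Hhat ΔK w) * ΔS := by
  have key : ∀ j, F (j + 1) = ΔK * (∑ w ∈ T j, wordVal Hhat ΔK w) * ΔS := by
    intro j
    induction j using Nat.strong_induction_on with
    | _ j IH =>
      rw [hF j, Finset.sum_range_succ']
      have h0 : aent (Hhat ^ (j - 0)) * F 0 = aent (Hhat ^ j) * ΔS := by
        rw [hF0, Nat.sub_zero]
      have hterm : ∀ k ∈ Finset.range j, aent (Hhat ^ (j - (k + 1))) * F (k + 1)
          = aent (Hhat ^ (j - 1 - k)) * (ΔK * (∑ v ∈ T k, wordVal Hhat ΔK v)) * ΔS := by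
        intro k hk
        rw [IH k (Finset.mem_range.mp hk), show j - (k + 1) = j - 1 - k by omega,
          ← Matrix.mul_assoc]
      rw [h0, Finset.sum_congr rfl hterm]
      have : (∑ k ∈ Finset.range j,
            aent (Hhat ^ (j - 1 - k)) * (ΔK * (∑ v ∈ T k, wordVal Hhat ΔK v)) * ΔS)
          + aent (Hhat ^ j) * ΔS
          = (aent (Hhat ^ j) + ∑ k ∈ Finset.range j,
              aent (Hhat ^ (j - 1 - k)) * (ΔK * (∑ v ∈ T k, wordVal Hhat ΔK v))) * ΔS := by
        rw [Matrix.add_mul, Matrix.sum_mul, add_comm]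
      rw [this, ← Skey Hhat ΔK hΔK j, Matrix.mul_assoc]
  intro j hj
  obtain ⟨m, rfl⟩ : ∃ m, j = m + 1 := ⟨j - 1, by omega⟩
  have he : (∑ᶠ w ∈ Aset m, wordVal Hhat ΔK w) = ∑ w ∈ T m, wordVal Hhat ΔK w := by
    rw [← Set.Finite.coe_toFinset (finite_Aset m), finsum_mem_coe_finset]
    rfl
  have : F (m + 1) = ΔK * (∑ᶠ w ∈ Aset m, wordVal Hhat ΔK w) * ΔS := by
    rw [he]; exact key m
  exact this
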